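/- Let ξ be an n₁×n₂ complex matrix. Then the block matrix U = [[(1+ξξᴴ)^{-1/2}, ξ(1+ξᴴξ)^{-1/2}], [−ξᴴ(1+ξξᴴ)^{-1/2}, (1+ξᴴξ)^{-1/2}]] is unitary. -/

import Mathlib

open Matrix ComplexOrder

/-- The positive semidefinite square root of a positive semidefinite matrix, as
`Matrix.PosSemidef.sqrt` was defined in the older Mathlib. -/
noncomputable def posSemidefSqrt {n : Type*} [Fintype n] [DecidableEq n]
    {A : Matrix n n ℂ} (hA : A.PosSemidef) : Matrix n n ℂ :=
  hA.1.eigenvectorUnitary.1 * diagonal ((↑) ∘ (√·) ∘ hA.1.eigenvalues) *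
  (star hA.1.eigenvectorUnitary : Matrix n n ℂ)

/-- The positive semidefinite square root of `1 + ξ * ξᴴ`. -/
noncomputable def sqrtOnePlusSelfMulConjTranspose {n₁ n₂ : ℕ}
    (ξ : Matrix (Fin n₁) (Fin n₂) ℂ) : Matrix (Fin n₁) (Fin n₁) ℂ :=
  posSemidefSqrt (Matrix.PosSemidef.add Matrix.PosSemidef.one
    (Matrix.posSemidef_self_mul_conjTranspose ξ))

/-- The positive semidefinite square root of `1 + ξᴴ * ξ`. -/
noncomputable def sqrtOnePlusConjTransposeMulSelf {n₁ n₂ : ℕ}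
    (ξ : Matrix (Fin n₁) (Fin n₂) ℂ) : Matrix (Fin n₂) (Fin n₂) ℂ :=
  posSemidefSqrt (Matrix.PosSemidef.add Matrix.PosSemidef.one
    (Matrix.posSemidef_conjTranspose_mul_self ξ))

lemma posSemidefSqrt_mul_self {n : Type*} [Fintype n] [DecidableEq n]
    {A : Matrix n n ℂ} (hA : A.PosSemidef) : posSemidefSqrt hA * posSemidefSqrt hA = A := by
  unfold posSemidefSqrt
  conv_rhs => rw [hA.1.spectral_theorem, Unitary.conjStarAlgAut_apply]
  have hU : (star hA.1.eigenvectorUnitary : Matrix n n ℂ) * hA.1.eigenvectorUnitary.1 = 1 :=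
    Unitary.star_mul_self_of_mem hA.1.eigenvectorUnitary.2
  have hD : diagonal (((↑) : ℝ → ℂ) ∘ (√·) ∘ hA.1.eigenvalues) *
      diagonal (((↑) : ℝ → ℂ) ∘ (√·) ∘ hA.1.eigenvalues) =
      diagonal (RCLike.ofReal ∘ hA.1.eigenvalues) := by
    rw [diagonal_mul_diagonal]
    congr 1
    funext i
    simp only [Function.comp_apply]
    rw [← Complex.ofReal_mul, Real.mul_self_sqrt (hA.eigenvalues_nonneg i)]
    rfl
  calc _ = hA.1.eigenvectorUnitary.1 * diagonal (((↑) : ℝ → ℂ) ∘ (√·) ∘ hA.1.eigenvalues) *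
      ((star hA.1.eigenvectorUnitary : Matrix n n ℂ) * hA.1.eigenvectorUnitary.1) *
      diagonal (((↑) : ℝ → ℂ) ∘ (√·) ∘ hA.1.eigenvalues) *
      (star hA.1.eigenvectorUnitary : Matrix n n ℂ) := by simp only [Matrix.mul_assoc]
    _ = _ := by rw [hU, Matrix.mul_one, Matrix.mul_assoc _ (diagonal _) (diagonal _), hD]

lemma posSemidefSqrt_isHermitian {n : Type*} [Fintype n] [DecidableEq n]
    {A : Matrix n n ℂ} (hA : A.PosSemidef) : (posSemidefSqrt hA)ᴴ = posSemidefSqrt hA := by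
  unfold posSemidefSqrt
  have hs : star (((↑) : ℝ → ℂ) ∘ (√·) ∘ hA.1.eigenvalues) =
      ((↑) : ℝ → ℂ) ∘ (√·) ∘ hA.1.eigenvalues := by
    funext i
    exact Complex.conj_ofReal _
  rw [conjTranspose_mul, conjTranspose_mul, diagonal_conjTranspose, hs]
  simp only [← Matrix.star_eq_conjTranspose, star_star, Matrix.mul_assoc]

lemma aux_isUnit {n : ℕ} {M S : Matrix (Fin n) (Fin n) ℂ} (hM : M.PosDef)
    (hS : S * S = M) : IsUnit S := by
  rw [Matrix.isUnit_iff_isUnit_det]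
  have := hM.isUnit
  rw [Matrix.isUnit_iff_isUnit_det, ← hS, Matrix.det_mul] at this
  exact isUnit_of_mul_isUnit_left this

/-- The block matrix
`U = [[(1+ξξᴴ)^{-1/2}, ξ(1+ξᴴξ)^{-1/2}], [−ξᴴ(1+ξξᴴ)^{-1/2}, (1+ξᴴξ)^{-1/2}]]` is unitary. -/
theorem block_matrix_unitary (n₁ n₂ : ℕ) (ξ : Matrix (Fin n₁) (Fin n₂) ℂ) :
    Matrix.fromBlocks
      (sqrtOnePlusSelfMulConjTranspose ξ)⁻¹ (ξ * (sqrtOnePlusConjTransposeMulSelf ξ)⁻¹)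
      (-(ξᴴ * (sqrtOnePlusSelfMulConjTranspose ξ)⁻¹)) (sqrtOnePlusConjTransposeMulSelf ξ)⁻¹
      ∈ Matrix.unitaryGroup (Fin n₁ ⊕ Fin n₂) ℂ := by
  set A := sqrtOnePlusSelfMulConjTranspose ξ with hAdef
  set B := sqrtOnePlusConjTransposeMulSelf ξ with hBdef
  have hA2 : A * A = 1 + ξ * ξᴴ :=
    (Matrix.PosSemidef.add Matrix.PosSemidef.one
      (Matrix.posSemidef_self_mul_conjTranspose ξ)) |> posSemidefSqrt_mul_self
  have hB2 : B * B = 1 + ξᴴ * ξ :=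
    (Matrix.PosSemidef.add Matrix.PosSemidef.one
      (Matrix.posSemidef_conjTranspose_mul_self ξ)) |> posSemidefSqrt_mul_self
  have hAH : Aᴴ = A :=
    (Matrix.PosSemidef.add Matrix.PosSemidef.one
      (Matrix.posSemidef_self_mul_conjTranspose ξ)) |> posSemidefSqrt_isHermitian
  have hBH : Bᴴ = B :=
    (Matrix.PosSemidef.add Matrix.PosSemidef.one
      (Matrix.posSemidef_conjTranspose_mul_self ξ)) |> posSemidefSqrt_isHermitian
  have hAu : IsUnit A := aux_isUnit
    (Matrix.PosDef.one.add_posSemidef (Matrix.posSemidef_self_mul_conjTranspose ξ)) hA2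
  have hBu : IsUnit B := aux_isUnit
    (Matrix.PosDef.one.add_posSemidef (Matrix.posSemidef_conjTranspose_mul_self ξ)) hB2
  have hAinv : A⁻¹ * A = 1 := Matrix.nonsing_inv_mul A (Matrix.isUnit_iff_isUnit_det A |>.1 hAu)
  have hAinv' : A * A⁻¹ = 1 := Matrix.mul_nonsing_inv A (Matrix.isUnit_iff_isUnit_det A |>.1 hAu)
  have hBinv : B⁻¹ * B = 1 := Matrix.nonsing_inv_mul B (Matrix.isUnit_iff_isUnit_det B |>.1 hBu)
  have hBinv' : B * B⁻¹ = 1 := Matrix.mul_nonsing_inv B (Matrix.isUnit_iff_isUnit_det B |>.1 hBu)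
  have hAiH : A⁻¹ᴴ = A⁻¹ := by rw [Matrix.conjTranspose_nonsing_inv, hAH]
  have hBiH : B⁻¹ᴴ = B⁻¹ := by rw [Matrix.conjTranspose_nonsing_inv, hBH]
  rw [Matrix.mem_unitaryGroup_iff']
  show _ᴴ * _ = 1
  rw [Matrix.fromBlocks_conjTranspose, Matrix.fromBlocks_multiply]
  have h11 : A⁻¹ᴴ * A⁻¹ + (-(ξᴴ * A⁻¹))ᴴ * -(ξᴴ * A⁻¹) = 1 := by
    have : A⁻¹ * A⁻¹ + A⁻¹ * (ξ * (ξᴴ * A⁻¹)) = A⁻¹ * ((1 + ξ * ξᴴ) * A⁻¹) := by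
      simp only [Matrix.add_mul, Matrix.mul_add, Matrix.one_mul, Matrix.mul_assoc]
    rw [hAiH, Matrix.conjTranspose_neg, Matrix.conjTranspose_mul, hAiH,
      Matrix.conjTranspose_conjTranspose, Matrix.neg_mul, Matrix.mul_neg, neg_neg,
      Matrix.mul_assoc, this, ← hA2, ← Matrix.mul_assoc, ← Matrix.mul_assoc, hAinv,
      Matrix.one_mul, hAinv']
  have h12 : A⁻¹ᴴ * (ξ * B⁻¹) + (-(ξᴴ * A⁻¹))ᴴ * B⁻¹ = 0 := by
    rw [hAiH, Matrix.conjTranspose_neg, Matrix.conjTranspose_mul, hAiH,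
      Matrix.conjTranspose_conjTranspose, Matrix.neg_mul, Matrix.mul_assoc]
    abel
  have h21 : (ξ * B⁻¹)ᴴ * A⁻¹ + B⁻¹ᴴ * -(ξᴴ * A⁻¹) = 0 := by
    rw [Matrix.conjTranspose_mul, hBiH, Matrix.mul_neg, Matrix.mul_assoc]
    abel
  have h22 : (ξ * B⁻¹)ᴴ * (ξ * B⁻¹) + B⁻¹ᴴ * B⁻¹ = 1 := by
    have : B⁻¹ * (ξᴴ * (ξ * B⁻¹)) + B⁻¹ * B⁻¹ = B⁻¹ * ((1 + ξᴴ * ξ) * B⁻¹) := by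
      simp only [Matrix.add_mul, Matrix.mul_add, Matrix.one_mul, Matrix.mul_assoc]
      abel
    rw [Matrix.conjTranspose_mul, hBiH,
      Matrix.mul_assoc, this, ← hB2, ← Matrix.mul_assoc, ← Matrix.mul_assoc, hBinv,
      Matrix.one_mul, hBinv']
  rw [h11, h12, h21, h22, Matrix.fromBlocks_one]
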